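/- Let 𝔨 be a finite-dimensional real Lie algebra equipped with an ad-invariant inner product (so 𝔨 is of compact type), and let 𝔥 ⊆ 𝔨 be a Cartan subalgebra. Let u : 𝔨 → 𝔨 be a continuous map satisfying ⁅u(X), X⁆ = 0 for every X ∈ 𝔨. Then u maps 𝔥 into itself: u(𝔥) ⊆ 𝔥. -/

import Mathlib

open scoped RealInnerProductSpace
open Module

section Aux
set_option linter.unusedSectionVars false
variable {E : Type*} [NormedAddCommGroup E] [InnerProductSpace ℝ E] [FiniteDimensional ℝ E]

lemma exists_avoid (p : Submodule ℝ E) (S : Finset (Submodule ℝ E))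
    (hS : ∀ V ∈ S, ¬ p ≤ V) : ∃ g ∈ p, ∀ V ∈ S, g ∉ V := by
  classical
  induction S using Finset.induction_on with
  | empty => exact ⟨0, p.zero_mem, by simp⟩
  | insert _ _ hV₀S' =>
    rename_i V₀ S' ih
    obtain ⟨g', hg'p, hg'⟩ := ih fun V hV => hS V (Finset.mem_insert_of_mem hV)
    by_cases hg0 : g' ∈ V₀
    · obtain ⟨y, hyp, hyV₀⟩ := SetLike.not_le_iff_exists.mp (hS V₀ (Finset.mem_insert_self _ _))
      -- the set of bad parameters is finite
      have hsub : ∀ V ∈ S', {t : ℝ | g' + t • y ∈ V}.Subsingleton := by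
        intro V hV t₁ ht₁ t₂ ht₂
        by_contra hne
        have hyV : y ∈ V := by
          have hsub2 : (t₁ - t₂) • y ∈ V := by
            have := V.sub_mem ht₁ ht₂
            simpa [sub_smul, add_sub_add_left_eq_sub] using this
          have := V.smul_mem (t₁ - t₂)⁻¹ hsub2
          rwa [inv_smul_smul₀ (sub_ne_zero.mpr hne)] at this
        have hgV : g' ∈ V := by
          have := V.sub_mem ht₁ (V.smul_mem t₁ hyV)
          simpa using this
        exact hg' V hV hgV
      have hbadfin : ({(0:ℝ)} ∪ ⋃ V ∈ S', {t : ℝ | g' + t • y ∈ V}).Finite := by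
        apply Set.Finite.union (Set.finite_singleton _)
        apply Set.Finite.biUnion S'.finite_toSet
        intro V hV
        exact (hsub V hV).finite
      obtain ⟨t, ht⟩ := (Set.infinite_univ.diff hbadfin).nonempty
      have htne : t ≠ 0 := by
        intro h; exact ht.2 (Set.mem_union_left _ (by simp [h]))
      refine ⟨g' + t • y, p.add_mem hg'p (p.smul_mem t hyp), ?_⟩
      intro V hV
      rcases Finset.mem_insert.mp hV with rfl | hV'
      · intro hmem
        have : t • y ∈ V := by
          have := V.sub_mem hmem hg0
          simpa using this
        have := V.smul_mem t⁻¹ this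
        rw [inv_smul_smul₀ htne] at this
        exact hyV₀ this
      · intro hmem
        exact ht.2 (Set.mem_union_right _ (Set.mem_biUnion hV' hmem))
    · refine ⟨g', hg'p, ?_⟩
      intro V hV
      rcases Finset.mem_insert.mp hV with rfl | hV'
      · exact hg0
      · exact hg' V hV'


lemma cover_bad (A : E → E →ₗ[ℝ] E) (H : Set E)
    (hskewA : ∀ Z x y : E, ⟪A Z x, y⟫ = -⟪x, A Z y⟫)
    (hswapA : ∀ x y : E, A x y = 0 → A y x = 0)
    (hcommA : ∀ h ∈ H, ∀ h' ∈ H, ∀ x : E, A h (A h' x) = A h' (A h x)) :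
    ∀ (n : ℕ) (W' : Submodule ℝ E), finrank ℝ W' = n →
    (∀ h ∈ H, ∀ w ∈ W', A h w ∈ W') →
    (∀ w ∈ W', (∀ h ∈ H, A h w = 0) → w = 0) →
    ∃ S : Finset (Submodule ℝ E), (∀ V ∈ S, ¬ Submodule.span ℝ H ≤ V) ∧
      ∀ h ∈ H, (∃ w ∈ W', w ≠ 0 ∧ A h w = 0) → ∃ V ∈ S, h ∈ V := by
  classical
  intro n
  induction n using Nat.strong_induction_on with
  | _ n ih =>
    intro W' hrank hinv hker
    by_cases hbot : W' = ⊥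
    · refine ⟨∅, by simp, ?_⟩
      rintro h hh ⟨w, hwW, hw0, -⟩
      exact absurd (by simpa [hbot] using hwW) hw0
    by_cases hsplit : ∃ h₀ ∈ H, (∃ w ∈ W', w ≠ 0 ∧ A h₀ w = 0) ∧ (∃ w' ∈ W', A h₀ w' ≠ 0)
    · obtain ⟨h₀, hh₀, ⟨w₁, hw₁W, hw₁0, hw₁A⟩, w₂, hw₂W, hw₂A⟩ := hsplit
      have hres : ∀ x ∈ W', A h₀ x ∈ W' := fun x hx => hinv h₀ hh₀ x hx
      set L : W' →ₗ[ℝ] W' := (A h₀).restrict hres with hL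
      have hLapp : ∀ x : W', (L x : E) = A h₀ (x : E) := fun x => rfl
      set K' := LinearMap.ker L with hK'
      set I' := LinearMap.range L with hI'
      have hKIbot : K' ⊓ I' = ⊥ := by
        rw [eq_bot_iff]
        rintro x ⟨hxK, hxI⟩
        obtain ⟨y, rfl⟩ := hxI
        have hx0 : A h₀ ((L y : W') : E) = 0 := by
          have h1 : L (L y) = 0 := hxK
          have h2 := congrArg (Subtype.val) h1
          rwa [hLapp] at h2
        have hinner : ⟪((L y : W') : E), ((L y : W') : E)⟫ = 0 := by
          have h1 := hskewA h₀ (y : E) ((L y : W') : E)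
          rw [hx0, inner_zero_right, neg_zero] at h1
          rw [← hLapp y] at h1
          exact h1
        have hc : ((L y : W') : E) = 0 := inner_self_eq_zero.mp hinner
        rw [Submodule.mem_bot]
        exact Subtype.ext (by simpa using hc)
      have hranks : finrank ℝ I' + finrank ℝ K' = finrank ℝ W' :=
        LinearMap.finrank_range_add_finrank_ker L
      have hsup : K' ⊔ I' = ⊤ := by
        apply Submodule.eq_top_of_finrank_eq
        have h3 := Submodule.finrank_sup_add_finrank_inf_eq K' I'
        rw [hKIbot] at h3
        simp only [finrank_bot, add_zero] at h3
        rw [h3, add_comm, hranks]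
      set K : Submodule ℝ E := K'.map W'.subtype with hK
      set I : Submodule ℝ E := I'.map W'.subtype with hI
      have hKmem : ∀ x : E, x ∈ K ↔ x ∈ W' ∧ A h₀ x = 0 := by
        intro x
        constructor
        · rintro ⟨a, haK, rfl⟩
          refine ⟨a.2, ?_⟩
          have h4 := congrArg Subtype.val (show L a = 0 from haK)
          rwa [hLapp] at h4
        · rintro ⟨hxW, hxA⟩
          refine ⟨⟨x, hxW⟩, ?_, rfl⟩
          show L ⟨x, hxW⟩ = 0
          apply Subtype.ext
          rw [hLapp]
          exact hxA
      have hImem : ∀ x : E, x ∈ I ↔ ∃ y ∈ W', A h₀ y = x := by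
        intro x
        constructor
        · rintro ⟨a, ⟨y, rfl⟩, rfl⟩
          exact ⟨(y : E), y.2, (hLapp y).symm⟩
        · rintro ⟨y, hyW, rfl⟩
          exact ⟨L ⟨y, hyW⟩, ⟨⟨y, hyW⟩, rfl⟩, hLapp _⟩
      have hKle : K ≤ W' := Submodule.map_subtype_le _ _
      have hIle : I ≤ W' := Submodule.map_subtype_le _ _
      have hKinv : ∀ h ∈ H, ∀ w ∈ K, A h w ∈ K := by
        intro h hh w hw
        rw [hKmem] at hw ⊢
        refine ⟨hinv h hh w hw.1, ?_⟩
        rw [← hcommA h hh h₀ hh₀ w, hw.2, map_zero]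
      have hIinv : ∀ h ∈ H, ∀ w ∈ I, A h w ∈ I := by
        intro h hh w hw
        rw [hImem] at hw ⊢
        obtain ⟨y, hyW, rfl⟩ := hw
        exact ⟨A h y, hinv h hh y hyW, (hcommA h hh h₀ hh₀ y).symm⟩
      have hK'top : K' ≠ ⊤ := by
        intro htop
        apply hw₂A
        have h5 : (⟨w₂, hw₂W⟩ : W') ∈ K' := htop ▸ Submodule.mem_top
        have h6 := congrArg Subtype.val (show L ⟨w₂, hw₂W⟩ = 0 from h5)
        rwa [hLapp] at h6
      have hI'top : I' ≠ ⊤ := by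
        intro htop
        have hsurj : Function.Surjective L := LinearMap.range_eq_top.mp htop
        have hinj : Function.Injective L := (LinearMap.injective_iff_surjective).mpr hsurj
        have h7 : L ⟨w₁, hw₁W⟩ = 0 := by
          apply Subtype.ext
          rw [hLapp]
          exact hw₁A
        have h8 := hinj (by rw [h7, map_zero] : L ⟨w₁, hw₁W⟩ = L 0)
        exact hw₁0 (by simpa [Subtype.ext_iff] using h8)
      have hKrank : finrank ℝ K < n := by
        rw [← hrank, hK, Submodule.finrank_map_subtype_eq]
        exact Submodule.finrank_lt hK'top
      have hIrank : finrank ℝ I < n := by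
        rw [← hrank, hI, Submodule.finrank_map_subtype_eq]
        exact Submodule.finrank_lt hI'top
      obtain ⟨SK, hSK1, hSK2⟩ := ih _ hKrank K rfl hKinv
        (fun w hw hall => hker w (hKle hw) hall)
      obtain ⟨SI, hSI1, hSI2⟩ := ih _ hIrank I rfl hIinv
        (fun w hw hall => hker w (hIle hw) hall)
      refine ⟨SK ∪ SI, ?_, ?_⟩
      · intro V hV
        rcases Finset.mem_union.mp hV with h | h
        exacts [hSK1 V h, hSI1 V h]
      · rintro h hh ⟨w, hwW, hw0, hwA⟩
        have hmem : (⟨w, hwW⟩ : W') ∈ K' ⊔ I' := hsup ▸ Submodule.mem_top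
        obtain ⟨k', hk', i', hi', hki⟩ := Submodule.mem_sup.mp hmem
        have hkK : ((k' : W') : E) ∈ K := ⟨k', hk', rfl⟩
        have hiI : ((i' : W') : E) ∈ I := ⟨i', hi', rfl⟩
        have hwsum : ((k' : W') : E) + ((i' : W') : E) = w := by
          have h9 := congrArg Subtype.val hki
          simpa using h9
        have hKIambient : ∀ x : E, x ∈ K → x ∈ I → x = 0 := by
          intro x hxK hxI
          obtain ⟨a, ha, rfl⟩ := hxK
          obtain ⟨b, hb, hba⟩ := hxI
          have hab : b = a := Subtype.ext hba
          subst hab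
          have h10 : b ∈ K' ⊓ I' := ⟨ha, hb⟩
          rw [hKIbot, Submodule.mem_bot] at h10
          simp [h10]
        have hsum0 : A h ((k' : W') : E) + A h ((i' : W') : E) = 0 := by
          rw [← map_add, hwsum, hwA]
        have hAk : A h ((k' : W') : E) = 0 := by
          have h11 : A h ((k' : W') : E) = -(A h ((i' : W') : E)) :=
            eq_neg_of_add_eq_zero_left hsum0
          refine hKIambient _ (hKinv h hh _ hkK) ?_
          rw [h11]
          exact I.neg_mem (hIinv h hh _ hiI)
        have hAi : A h ((i' : W') : E) = 0 := by
          have h12 : A h ((i' : W') : E) = -(A h ((k' : W') : E)) :=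
            eq_neg_of_add_eq_zero_right hsum0
          rw [h12, hAk, neg_zero]
        by_cases hk0 : ((k' : W') : E) = 0
        · have hi0 : ((i' : W') : E) ≠ 0 := by
            intro h13
            apply hw0
            rw [← hwsum, hk0, h13, add_zero]
          obtain ⟨V, hV, hVm⟩ := hSI2 h hh ⟨_, hiI, hi0, hAi⟩
          exact ⟨V, Finset.mem_union_right _ hV, hVm⟩
        · obtain ⟨V, hV, hVm⟩ := hSK2 h hh ⟨_, hkK, hk0, hAk⟩
          exact ⟨V, Finset.mem_union_left _ hV, hVm⟩
    · push_neg at hsplit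
      obtain ⟨w₀, hw₀W, hw₀0⟩ := (Submodule.ne_bot_iff W').mp hbot
      set V₀ : Submodule ℝ E := ⨅ w : W', LinearMap.ker (A (w : E)) with hV₀
      have hV₀mem : ∀ x : E, x ∈ V₀ ↔ ∀ w : W', A (w : E) x = 0 := by
        intro x
        simp [hV₀, Submodule.mem_iInf, LinearMap.mem_ker]
      refine ⟨{V₀}, ?_, ?_⟩
      · intro V hV
        rw [Finset.mem_singleton] at hV
        subst hV
        intro hle
        apply hw₀0
        apply hker w₀ hw₀W
        intro h hh
        apply hswapA
        have h14 : h ∈ V₀ := hle (Submodule.subset_span hh)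
        exact (hV₀mem h).mp h14 ⟨w₀, hw₀W⟩
      · rintro h hh ⟨w, hwW, hw0, hwA⟩
        refine ⟨V₀, Finset.mem_singleton_self _, ?_⟩
        rw [hV₀mem]
        intro w'
        apply hswapA
        exact hsplit h hh ⟨w, hwW, hw0, hwA⟩ (w' : E) w'.2


theorem aux_main (B : E → E → E) (H : Set E)
    (hskew : ∀ X Y Z : E, ⟪B Z X, Y⟫ + ⟪X, B Z Y⟫ = 0)
    (hswap : ∀ x y : E, B x y = 0 → B y x = 0)
    (hjac : ∀ h h' x : E, B h h' = 0 → B h (B h' x) = B h' (B h x))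
    (hzero : (0 : E) ∈ H)
    (hnorm : ∀ x : E, (∀ h ∈ H, B x h ∈ H) → x ∈ H)
    (hnil : ∃ k : ℕ, ∀ h ∈ H, ∀ x ∈ H, (B h)^[k] x = 0)
    (u : E → E) (hu : Continuous u) (hcommu : ∀ x : E, B x (u x) = 0) :
    ∀ X ∈ H, u X ∈ H := by
  classical
  -- each B Z is skew in the inner-product sense
  have hskew' : ∀ Z a b : E, ⟪B Z a, b⟫ = -⟪a, B Z b⟫ := by
    intro Z a b
    linarith [hskew a b Z]
  -- each B Z is linear
  have hadd : ∀ Z x y : E, B Z (x + y) = B Z x + B Z y := by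
    intro Z x y
    apply ext_inner_right ℝ
    intro v
    rw [inner_add_left, hskew', hskew', hskew', inner_add_left]
    ring
  have hsmul : ∀ (Z : E) (c : ℝ) (x : E), B Z (c • x) = c • B Z x := by
    intro Z c x
    apply ext_inner_right ℝ
    intro v
    rw [real_inner_smul_left, hskew', hskew', real_inner_smul_left]
    ring
  set A : E → E →ₗ[ℝ] E := fun Z =>
    { toFun := B Z, map_add' := hadd Z, map_smul' := hsmul Z } with hA
  have hAapp : ∀ Z x : E, A Z x = B Z x := fun _ _ => rfl
  have hskewA : ∀ Z x y : E, ⟪A Z x, y⟫ = -⟪x, A Z y⟫ := hskew'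
  have hswapA : ∀ x y : E, A x y = 0 → A y x = 0 := hswap
  set W₀ : Submodule ℝ E := Submodule.span ℝ H with hW₀
  have hHsub : H ⊆ W₀ := Submodule.subset_span
  -- elements of H kill the span of H
  have hkill : ∀ h ∈ H, ∀ x ∈ W₀, A h x = 0 := by
    intro h hh
    obtain ⟨k, hk⟩ := hnil
    have hiter : ∀ (m : ℕ) (x : E), (A h ^ m) x = (B h)^[m] x := by
      intro m
      induction m with
      | zero => simp
      | succ n ihn =>
        intro x
        rw [pow_succ, Module.End.mul_apply, Function.iterate_succ_apply, ihn (A h x)]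
        rfl
    have hspan : ∀ x ∈ W₀, (A h ^ k) x = 0 := by
      intro x hx
      have hle : W₀ ≤ LinearMap.ker (A h ^ k) := by
        rw [hW₀, Submodule.span_le]
        intro y hy
        rw [SetLike.mem_coe, LinearMap.mem_ker, hiter]
        exact hk h hh y hy
      exact hle hx
    have hdesc : ∀ m : ℕ, (∀ x ∈ W₀, (A h ^ (m + 1)) x = 0) → ∀ x ∈ W₀, A h x = 0 := by
      intro m
      induction m with
      | zero => intro h1 x hx; simpa using h1 x hx
      | succ n ihn =>
        intro h1 x hx
        refine ihn ?_ x hx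
        intro y hy
        have hnormy : ⟪(A h ^ (n + 1)) y, (A h ^ (n + 1)) y⟫ = 0 := by
          have e1 : (A h ^ (n + 1)) y = A h ((A h ^ n) y) := by
            rw [pow_succ', Module.End.mul_apply]
          have e2 : A h ((A h ^ (n + 1)) y) = (A h ^ (n + 2)) y := by
            rw [e1]
            conv_rhs => rw [pow_succ', Module.End.mul_apply, pow_succ', Module.End.mul_apply]
          calc ⟪(A h ^ (n + 1)) y, (A h ^ (n + 1)) y⟫
              = ⟪A h ((A h ^ n) y), (A h ^ (n + 1)) y⟫ := by rw [← e1]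
            _ = -⟪(A h ^ n) y, A h ((A h ^ (n + 1)) y)⟫ := hskewA _ _ _
            _ = -⟪(A h ^ n) y, (A h ^ (n + 2)) y⟫ := by rw [e2]
            _ = 0 := by rw [h1 y hy, inner_zero_right, neg_zero]
        exact inner_self_eq_zero.mp hnormy
    cases k with
    | zero =>
      intro x hx
      have hx0 : x = 0 := by simpa using hspan x hx
      rw [hx0, map_zero]
    | succ m => exact hdesc m hspan
  -- H coincides with its span
  have hW₀H : ∀ x ∈ W₀, x ∈ H := by
    intro x hx
    apply hnorm
    intro h hh
    have h1 : B h x = 0 := hkill h hh x hx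
    have h2 : B x h = 0 := hswap h x h1
    rw [h2]
    exact hzero
  have hcommA : ∀ h ∈ H, ∀ h' ∈ H, ∀ x : E, A h (A h' x) = A h' (A h x) := by
    intro h hh h' hh' x
    exact hjac h h' x (hkill h hh h' (hHsub hh'))
  set W : Submodule ℝ E := W₀ᗮ with hW
  have hWinv : ∀ h ∈ H, ∀ w ∈ W, A h w ∈ W := by
    intro h hh w hw
    rw [hW, Submodule.mem_orthogonal] at hw ⊢
    intro v hv
    have h3 : ⟪A h v, w⟫ = -⟪v, A h w⟫ := hskewA _ _ _
    have h4 : A h v = 0 := hkill h hh v hv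
    rw [h4, inner_zero_left] at h3
    linarith
  have hWker : ∀ w ∈ W, (∀ h ∈ H, A h w = 0) → w = 0 := by
    intro w hw hall
    have hwH : w ∈ H := by
      apply hnorm
      intro h hh
      rw [hswap h w (hall h hh)]
      exact hzero
    have hwW₀ : w ∈ W₀ := hHsub hwH
    rw [hW, Submodule.mem_orthogonal] at hw
    exact inner_self_eq_zero.mp (hw w hwW₀)
  obtain ⟨S, hS1, hS2⟩ := cover_bad A H hskewA hswapA hcommA (finrank ℝ W) W rfl hWinv hWker
  intro X hX
  obtain ⟨g, hgW₀, hg⟩ := exists_avoid W₀ S (fun V hV => by rw [hW₀]; exact hS1 V hV)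
  -- good points near X along the segment to g
  have hchoice : ∀ n : ℕ, ∃ s : ℝ, s ∈ Set.Ioo (0:ℝ) (1/(n+1)) ∧
      ∀ V ∈ S, X + s • (g - X) ∉ V := by
    intro n
    have hline : ∀ V ∈ S, {s : ℝ | X + s • (g - X) ∈ V}.Subsingleton := by
      intro V hV t₁ ht₁ t₂ ht₂
      by_contra hne
      have hgx : g - X ∈ V := by
        have h5 : (t₁ - t₂) • (g - X) ∈ V := by
          have := V.sub_mem ht₁ ht₂
          simpa [sub_smul, add_sub_add_left_eq_sub] using this
        have h6 := V.smul_mem (t₁ - t₂)⁻¹ h5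
        rwa [inv_smul_smul₀ (sub_ne_zero.mpr hne)] at h6
      have hXV : X ∈ V := by
        have := V.sub_mem ht₁ (V.smul_mem t₁ hgx)
        simpa using this
      apply hg V hV
      have := V.add_mem hgx hXV
      simpa using this
    have hbadfin : (⋃ V ∈ S, {s : ℝ | X + s • (g - X) ∈ V}).Finite :=
      Set.Finite.biUnion S.finite_toSet fun V hV => (hline V hV).finite
    have hIoo : (Set.Ioo (0:ℝ) (1/(n+1))).Infinite := Set.Ioo_infinite (by positivity)
    obtain ⟨s, hs⟩ := (hIoo.diff hbadfin).nonempty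
    refine ⟨s, hs.1, ?_⟩
    intro V hV hmem
    exact hs.2 (Set.mem_biUnion hV hmem)
  choose t ht1 ht2 using hchoice
  set seq : ℕ → E := fun n => X + t n • (g - X) with hseq
  have hseqW₀ : ∀ n, seq n ∈ W₀ := fun n =>
    W₀.add_mem (hHsub hX) (W₀.smul_mem _ (W₀.sub_mem hgW₀ (hHsub hX)))
  have hseqH : ∀ n, seq n ∈ H := fun n => hW₀H _ (hseqW₀ n)
  have hseqgood : ∀ n, u (seq n) ∈ W₀ := by
    intro n
    have hcu : A (seq n) (u (seq n)) = 0 := hcommu (seq n)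
    set p : E := W₀.starProjection (u (seq n)) with hp
    have hpW₀ : p ∈ W₀ := W₀.starProjection_apply_mem _
    have hwW : u (seq n) - p ∈ W := W₀.sub_starProjection_mem_orthogonal _
    have h7 : A (seq n) (u (seq n) - p) = 0 := by
      rw [map_sub, hcu, hkill (seq n) (hseqH n) p hpW₀, sub_zero]
    by_cases hw0 : u (seq n) - p = 0
    · rw [sub_eq_zero] at hw0
      rw [hw0]
      exact hpW₀
    · exfalso
      obtain ⟨V, hV, hmem⟩ := hS2 (seq n) (hseqH n) ⟨u (seq n) - p, hwW, hw0, h7⟩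
      exact ht2 n V hV hmem
  have htt : Filter.Tendsto t Filter.atTop (nhds 0) := by
    apply squeeze_zero (fun n => (ht1 n).1.le) (fun n => (ht1 n).2.le)
    exact tendsto_one_div_add_atTop_nhds_zero_nat
  have hseqlim : Filter.Tendsto seq Filter.atTop (nhds X) := by
    have h8 : Filter.Tendsto seq Filter.atTop (nhds (X + (0:ℝ) • (g - X))) :=
      Filter.Tendsto.const_add _ (htt.smul_const _)
    simpa using h8
  have hulim : Filter.Tendsto (fun n => u (seq n)) Filter.atTop (nhds (u X)) :=
    (hu.tendsto X).comp hseqlim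
  have hclosed : IsClosed (W₀ : Set E) := Submodule.closed_of_finiteDimensional W₀
  have huX : u X ∈ W₀ :=
    hclosed.mem_of_tendsto hulim (Filter.Eventually.of_forall hseqgood)
  exact hW₀H _ huX

end Aux


section LieHelpers

variable {L : Type*} [LieRing L]

lemma lie_helper_swap (x y : L) (h : ⁅x, y⁆ = 0) : ⁅y, x⁆ = 0 := by
  have h2 := lie_skew x y
  rw [h] at h2
  exact neg_eq_zero.mp h2

lemma lie_helper_jac (h h' x : L) (hB : ⁅h, h'⁆ = 0) : ⁅h, ⁅h', x⁆⁆ = ⁅h', ⁅h, x⁆⁆ := by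
  rw [leibniz_lie, hB, zero_lie, zero_add]

lemma lie_helper_zero (x : L) : ⁅x, (0 : L)⁆ = 0 := lie_zero x

lemma lie_helper_nilp [LieAlgebra ℝ L] (K : LieSubalgebra ℝ L)
    (hK : LieRing.IsNilpotent K) :
    ∃ k : ℕ, ∀ h ∈ K, ∀ x ∈ K, (fun y : L => ⁅h, y⁆)^[k] x = 0 := by
  haveI := hK
  obtain ⟨k, hk⟩ := LieAlgebra.nilpotent_ad_of_nilpotent_algebra ℝ ↥K
  refine ⟨k, fun h hh x hx => ?_⟩
  have key : ∀ (m : ℕ) (y : ↥K),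
      (fun y : L => ⁅h, y⁆)^[m] (y : L) = (((LieAlgebra.ad ℝ ↥K ⟨h, hh⟩) ^ m) y : L) := by
    intro m
    induction m with
    | zero => intro y; simp
    | succ n ihn =>
      intro y
      rw [Function.iterate_succ_apply, pow_succ, Module.End.mul_apply]
      have e : (⁅h, (y : L)⁆ : L) = ((LieAlgebra.ad ℝ ↥K ⟨h, hh⟩ y : ↥K) : L) := by
        rw [LieAlgebra.ad_apply]
        rfl
      rw [e, ihn]
  have h2 := key k ⟨x, hx⟩
  rw [hk ⟨h, hh⟩] at h2
  simpa using h2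

end LieHelpers

/-- If `u : 𝔨 → 𝔨` is a continuous map on a compact-type Lie algebra (one carrying an
`ad`-invariant inner product) with `⁅u(X), X⁆ = 0` for all `X`, then `u` maps any
Cartan subalgebra `𝔥` into itself. -/
theorem continuous_commuting_map_preserves_cartan
    (𝔨 : Type*) [NormedAddCommGroup 𝔨] [InnerProductSpace ℝ 𝔨]
    [FiniteDimensional ℝ 𝔨] [LieRing 𝔨] [LieAlgebra ℝ 𝔨]
    (had : ∀ X Y Z : 𝔨, ⟪⁅Z, X⁆, Y⟫ + ⟪X, ⁅Z, Y⁆⟫ = 0)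
    (𝔥 : LieSubalgebra ℝ 𝔨) (hCartan : 𝔥.IsCartanSubalgebra)
    (u : 𝔨 → 𝔨) (hu : Continuous u)
    (hcomm : ∀ X : 𝔨, ⁅u X, X⁆ = 0) :
    ∀ X ∈ 𝔥, u X ∈ 𝔥 := by
  classical
  -- the zero elements of the two additive structures agree
  have hz := lie_self (0:𝔨)
  have hinner0 : ⟪⁅(0:𝔨), (0:𝔨)⁆, ⁅(0:𝔨), (0:𝔨)⁆⟫ = (0:ℝ) := by
    have h1 := had ⁅(0:𝔨), (0:𝔨)⁆ ⁅(0:𝔨), (0:𝔨)⁆ (0:𝔨)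
    rw [hz] at h1
    rw [lie_helper_zero (0:𝔨)] at h1
    rw [hz]
    linarith
  have hzeq := hz.symm.trans (inner_self_eq_zero.mp hinner0)
  -- hypotheses for the abstract theorem
  have hswap' : ∀ x y : 𝔨, ⁅x, y⁆ = (@OfNat.ofNat 𝔨 0 (@Zero.toOfNat0 𝔨 (@NegZeroClass.toZero 𝔨 (@SubNegZeroMonoid.toNegZeroClass 𝔨 (@SubtractionMonoid.toSubNegZeroMonoid 𝔨 (@SubtractionCommMonoid.toSubtractionMonoid 𝔨 (@AddCommGroup.toDivisionAddCommMonoid 𝔨 (‹NormedAddCommGroup 𝔨›).toAddCommGroup))))))) → ⁅y, x⁆ = (@OfNat.ofNat 𝔨 0 (@Zero.toOfNat0 𝔨 (@NegZeroClass.toZero 𝔨 (@SubNegZeroMonoid.toNegZeroClass 𝔨 (@SubtractionMonoid.toSubNegZeroMonoid 𝔨 (@SubtractionCommMonoid.toSubtractionMonoid 𝔨 (@AddCommGroup.toDivisionAddCommMonoid 𝔨 (‹NormedAddCommGroup 𝔨›).toAddCommGroup))))))) := by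
    intro x y h
    rw [← hzeq] at h ⊢
    exact lie_helper_swap x y h
  have hjac' : ∀ h h' x : 𝔨, ⁅h, h'⁆ = (@OfNat.ofNat 𝔨 0 (@Zero.toOfNat0 𝔨 (@NegZeroClass.toZero 𝔨 (@SubNegZeroMonoid.toNegZeroClass 𝔨 (@SubtractionMonoid.toSubNegZeroMonoid 𝔨 (@SubtractionCommMonoid.toSubtractionMonoid 𝔨 (@AddCommGroup.toDivisionAddCommMonoid 𝔨 (‹NormedAddCommGroup 𝔨›).toAddCommGroup))))))) → ⁅h, ⁅h', x⁆⁆ = ⁅h', ⁅h, x⁆⁆ := by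
    intro h h' x hB
    rw [← hzeq] at hB
    exact lie_helper_jac h h' x hB
  have hzero' : (@OfNat.ofNat 𝔨 0 (@Zero.toOfNat0 𝔨 (@NegZeroClass.toZero 𝔨 (@SubNegZeroMonoid.toNegZeroClass 𝔨 (@SubtractionMonoid.toSubNegZeroMonoid 𝔨 (@SubtractionCommMonoid.toSubtractionMonoid 𝔨 (@AddCommGroup.toDivisionAddCommMonoid 𝔨 (‹NormedAddCommGroup 𝔨›).toAddCommGroup))))))) ∈ {x : 𝔨 | x ∈ 𝔥} := hzeq ▸ 𝔥.zero_mem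
  have hnorm' : ∀ x : 𝔨, (∀ h ∈ {x : 𝔨 | x ∈ 𝔥}, ⁅x, h⁆ ∈ {x : 𝔨 | x ∈ 𝔥}) →
      x ∈ {x : 𝔨 | x ∈ 𝔥} := by
    intro x hx
    show x ∈ 𝔥
    rw [← hCartan.self_normalizing]
    exact (𝔥.mem_normalizer_iff x).mpr hx
  have hnil' : ∃ k : ℕ, ∀ h ∈ {x : 𝔨 | x ∈ 𝔥}, ∀ x ∈ {x : 𝔨 | x ∈ 𝔥},
      (fun y : 𝔨 => ⁅h, y⁆)^[k] x = (@OfNat.ofNat 𝔨 0 (@Zero.toOfNat0 𝔨 (@NegZeroClass.toZero 𝔨 (@SubNegZeroMonoid.toNegZeroClass 𝔨 (@SubtractionMonoid.toSubNegZeroMonoid 𝔨 (@SubtractionCommMonoid.toSubtractionMonoid 𝔨 (@AddCommGroup.toDivisionAddCommMonoid 𝔨 (‹NormedAddCommGroup 𝔨›).toAddCommGroup))))))) := by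
    obtain ⟨k, hk⟩ := lie_helper_nilp 𝔥 hCartan.nilpotent
    refine ⟨k, fun h hh x hx => ?_⟩
    rw [← hzeq]
    exact hk h hh x hx
  have hcommu' : ∀ x : 𝔨, ⁅x, u x⁆ = (@OfNat.ofNat 𝔨 0 (@Zero.toOfNat0 𝔨 (@NegZeroClass.toZero 𝔨 (@SubNegZeroMonoid.toNegZeroClass 𝔨 (@SubtractionMonoid.toSubNegZeroMonoid 𝔨 (@SubtractionCommMonoid.toSubtractionMonoid 𝔨 (@AddCommGroup.toDivisionAddCommMonoid 𝔨 (‹NormedAddCommGroup 𝔨›).toAddCommGroup))))))) := by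
    intro x
    rw [← hzeq]
    apply lie_helper_swap
    rw [hcomm x]
  exact aux_main (fun Z x : 𝔨 => ⁅Z, x⁆) {x : 𝔨 | x ∈ 𝔥} had hswap' hjac' hzero' hnorm'
    hnil' u hu hcommu'
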